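/- Let α = (α_1,…,α_n) be a sequence of nonnegative integers summing to n whose support is an upper interval (for some t, α_k ≥ 1 exactly when t ≤ k ≤ n), let e_α be the corresponding layered permutation and f_α the unique valley permutation of shape α. Then the set of fireworks permutations of shape α equals the left weak order interval [e_α, f_α⁻¹]_L = { w : e_α ≤_L w ≤_L f_α⁻¹ }, and the set of inverse fireworks permutations of shape α equals the right weak order interval [e_α, f_α]_R = { w : e_α ≤_R w ≤_R f_α }. -/

import Mathlib

open scoped Classical

noncomputable section

namespace RajRegularity

variable {n : ℕ}

/-- Maximal length of an increasing subsequence of `w(i), …, w(n)` beginning with `w(i)`: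
the largest cardinality of a set `s` of positions that contains `i`, consists of positions
`≥ i`, and on which `w` is strictly increasing. -/
def lisFrom (w : Equiv.Perm (Fin n)) (i : Fin n) : ℕ :=
  (Finset.univ.filter fun s : Finset (Fin n) =>
      i ∈ s ∧ (∀ j ∈ s, i ≤ j) ∧ ∀ j ∈ s, ∀ k ∈ s, j < k → w j < w k).sup Finset.card

/-- `rajCode w i = (n − i + 1) −` (maximal length of an increasing subsequence of
`w(i), …, w(n)` beginning with `w(i)`); here positions are 0-based, so the number of
positions `≥ i` is `n - i`. -/
def rajCode (w : Equiv.Perm (Fin n)) (i : Fin n) : ℕ :=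
  (n - (i : ℕ)) - lisFrom w i

/-- The Rajchgot index `raj w = Σᵢ rajCode w i`. -/
def raj (w : Equiv.Perm (Fin n)) : ℕ := ∑ i, rajCode w i

/-- The number of inversions of `w`: pairs of positions `i < j` with `w i > w j`. -/
def invNum (w : Equiv.Perm (Fin n)) : ℕ :=
  (Finset.univ.filter fun p : Fin n × Fin n => p.1 < p.2 ∧ w p.2 < w p.1).card

/-- The `i`-th entry of the inv code: `ℓ_i(w) = #{ j : i < j, w j < w i }`. -/
def ellCode (w : Equiv.Perm (Fin n)) (i : Fin n) : ℕ :=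
  (Finset.univ.filter fun j : Fin n => i < j ∧ w j < w i).card

/-- The set of descent positions of `w` (0-based position `j` with `w j > w (j+1)`). -/
def descents (w : Equiv.Perm (Fin n)) : Finset (Fin n) :=
  Finset.univ.filter fun j : Fin n =>
    if h : (j : ℕ) + 1 < n then w ⟨(j : ℕ) + 1, h⟩ < w j else False

/-- The major index: the sum of the (1-based) descent positions of `w`. -/
def maj (w : Equiv.Perm (Fin n)) : ℕ := ∑ j ∈ descents w, ((j : ℕ) + 1)

/-- `mCode w i`: the number of descents of `w` at positions `≥ i`. -/
def mCode (w : Equiv.Perm (Fin n)) (i : Fin n) : ℕ :=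
  ((descents w).filter fun j => i ≤ j).card

/-- `w` is dominant iff it avoids the pattern 132. -/
def Dominant (w : Equiv.Perm (Fin n)) : Prop :=
  ¬ ∃ i j k : Fin n, i < j ∧ j < k ∧ w i < w k ∧ w k < w j

/-- `w` is fireworks iff there are no positions `i < j` with `w j < w (j+1) < w i`. -/
def Fireworks (w : Equiv.Perm (Fin n)) : Prop :=
  ¬ ∃ (i j : Fin n) (h : (j : ℕ) + 1 < n),
      i < j ∧ w j < w ⟨(j : ℕ) + 1, h⟩ ∧ w ⟨(j : ℕ) + 1, h⟩ < w i

/-- `w` is inverse fireworks iff `w⁻¹` is fireworks. -/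
def InvFireworks (w : Equiv.Perm (Fin n)) : Prop := Fireworks w⁻¹

/-- `w` is a valley permutation: for some `a`, it is strictly decreasing on positions `≤ a`
and strictly increasing on positions `≥ a`. -/
def Valley (w : Equiv.Perm (Fin n)) : Prop :=
  ∃ a : ℕ, (∀ i j : Fin n, i < j → (j : ℕ) ≤ a → w j < w i) ∧
    ∀ i j : Fin n, a ≤ (i : ℕ) → i < j → w i < w j

/-- `eps w i` is the (1-based) blob index `ε_i(w) = i + r_i(w)`. -/
def eps (w : Equiv.Perm (Fin n)) (i : Fin n) : ℕ := (i : ℕ) + 1 + rajCode w i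

/-- The shape of `w`: `α_k(w) = #{ i : ε_i(w) = k }` (here `k : Fin n` stands for the
1-based index `k + 1`). -/
def shape (w : Equiv.Perm (Fin n)) : Fin n → ℕ := fun k =>
  (Finset.univ.filter fun i : Fin n => eps w i = (k : ℕ) + 1).card

/-- Dominance order on shapes: `α ⪰ β` iff every tail sum of `α` is at least the
corresponding tail sum of `β`. -/
def Dominates (α β : Fin n → ℕ) : Prop :=
  ∀ m : Fin n,
    ∑ k ∈ Finset.univ.filter (fun k : Fin n => m ≤ k), β k ≤
      ∑ k ∈ Finset.univ.filter (fun k : Fin n => m ≤ k), α k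

/-- Right weak order: `u ≤_R w` iff `w = u * v` length-additively. -/
def leR (u w : Equiv.Perm (Fin n)) : Prop :=
  ∃ v : Equiv.Perm (Fin n), w = u * v ∧ invNum w = invNum u + invNum v

/-- Left weak order: `u ≤_L w` iff `w = v * u` length-additively. -/
def leL (u w : Equiv.Perm (Fin n)) : Prop :=
  ∃ v : Equiv.Perm (Fin n), w = v * u ∧ invNum w = invNum v + invNum u

/-- Two-sided weak order: the transitive closure of the union of left and right weak
orders (both are reflexive, so we may use the reflexive-transitive closure). -/
def leLR (u w : Equiv.Perm (Fin n)) : Prop :=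
  Relation.ReflTransGen (fun a b : Equiv.Perm (Fin n) => leL a b ∨ leR a b) u w

/-- The maximum of the block of the set partition `π(w)` containing the value `v`;
the block of `v` is `{ v' : ε_{w⁻¹ v'}(w) = ε_{w⁻¹ v}(w) }`. -/
def blockMax (w : Equiv.Perm (Fin n)) (v : Fin n) : ℕ :=
  ((Finset.univ.filter fun v' : Fin n => eps w (w⁻¹ v') = eps w (w⁻¹ v)).max'
      ⟨v, Finset.mem_filter.mpr ⟨Finset.mem_univ v, rfl⟩⟩).val

/-- The fireworks map `Φ`: the one-line word of `Φ w` lists the blocks of `π(w)` in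
increasing order of their maxima, each block written in decreasing order.  Equivalently,
`Φ w` sorts the values by the key (max of block, value reversed), lexicographically. -/
def Phi (w : Equiv.Perm (Fin n)) : Equiv.Perm (Fin n) :=
  Tuple.sort fun v : Fin n => n * blockMax w v + (n - 1 - (v : ℕ))

/-- The inverse fireworks map `Φ_inv w = Φ(w⁻¹)⁻¹`. -/
def PhiInv (w : Equiv.Perm (Fin n)) : Equiv.Perm (Fin n) := (Phi w⁻¹)⁻¹

/-- Partial sums of a sequence of block sizes. -/
def psum (a : ℕ → ℕ) (m : ℕ) : ℕ := ∑ j ∈ Finset.range m, a j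

/-- The index of the block (interval `[psum a m, psum a (m+1))`) containing the value `v`. -/
def blockIdx (n : ℕ) (a : ℕ → ℕ) (v : Fin n) : ℕ :=
  ((Finset.range n).filter fun m => psum a (m + 1) ≤ (v : ℕ)).card

/-- The layered permutation with block sizes `a 0, a 1, …`: it reverses each of the
consecutive intervals `[psum a m, psum a (m+1))` of `{0, …, n-1}`.  Equivalently, its
one-line word sorts the values by (block index, value reversed) lexicographically. -/
def layered (n : ℕ) (a : ℕ → ℕ) : Equiv.Perm (Fin n) :=
  Tuple.sort fun v : Fin n => n * blockIdx n a v + (n - 1 - (v : ℕ))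

/-- The layered permutation `e_α` associated to a shape `α : Fin n → ℕ`. -/
def eOf (α : Fin n → ℕ) : Equiv.Perm (Fin n) :=
  layered n fun m => if h : m < n then α ⟨m, h⟩ else 0

theorem _root_.Equiv.Perm.apply_inv_self {β : Type*} (f : Equiv.Perm β) (x : β) :
    f (f⁻¹ x) = x := f.apply_symm_apply x

theorem _root_.Equiv.Perm.inv_apply_self {β : Type*} (f : Equiv.Perm β) (x : β) :
    f⁻¹ (f x) = x := f.symm_apply_apply x

/-! ### Chains and basic `lisFrom` API -/

/-- `s` is an increasing chain of positions starting at `i`. -/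
def IsChain (w : Equiv.Perm (Fin n)) (i : Fin n) (s : Finset (Fin n)) : Prop :=
  i ∈ s ∧ (∀ j ∈ s, i ≤ j) ∧ ∀ j ∈ s, ∀ k ∈ s, j < k → w j < w k

lemma isChain_singleton (w : Equiv.Perm (Fin n)) (i : Fin n) : IsChain w i {i} := by
  refine ⟨Finset.mem_singleton_self i, ?_, ?_⟩ <;> intros <;> simp_all

lemma card_le_lisFrom {w : Equiv.Perm (Fin n)} {i : Fin n} {s : Finset (Fin n)}
    (h : IsChain w i s) : s.card ≤ lisFrom w i := by
  refine Finset.le_sup ?_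
  simpa [Finset.mem_filter, IsChain] using h

lemma exists_lis_chain (w : Equiv.Perm (Fin n)) (i : Fin n) :
    ∃ s, IsChain w i s ∧ s.card = lisFrom w i := by
  obtain ⟨s, hs, he⟩ := Finset.exists_mem_eq_sup
    (Finset.univ.filter fun s : Finset (Fin n) =>
      i ∈ s ∧ (∀ j ∈ s, i ≤ j) ∧ ∀ j ∈ s, ∀ k ∈ s, j < k → w j < w k)
    ⟨{i}, by simpa [Finset.mem_filter] using isChain_singleton w i⟩ Finset.card
  refine ⟨s, ?_, he.symm⟩
  simpa [IsChain, Finset.mem_filter] using hs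

lemma one_le_lisFrom (w : Equiv.Perm (Fin n)) (i : Fin n) : 1 ≤ lisFrom w i := by
  simpa using card_le_lisFrom (isChain_singleton w i)

lemma lisFrom_le (w : Equiv.Perm (Fin n)) (i : Fin n) : lisFrom w i ≤ n - (i : ℕ) := by
  obtain ⟨s, hs, hcard⟩ := exists_lis_chain w i
  rw [← hcard]
  calc s.card ≤ (Finset.Ici i).card := Finset.card_le_card fun j hj =>
        Finset.mem_Ici.mpr (hs.2.1 j hj)
    _ = n - (i : ℕ) := Fin.card_Ici i

lemma lisFrom_le_n (w : Equiv.Perm (Fin n)) (i : Fin n) : lisFrom w i ≤ n :=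
  (lisFrom_le w i).trans (Nat.sub_le _ _)

lemma lisFrom_succ_le {w : Equiv.Perm (Fin n)} {i j : Fin n} (hij : i < j) (hw : w i < w j) :
    lisFrom w j + 1 ≤ lisFrom w i := by
  obtain ⟨s, ⟨hjs, hmin, hinc⟩, hcard⟩ := exists_lis_chain w j
  have hi : i ∉ s := fun h => absurd (hmin i h) (not_le.mpr hij)
  have hchain : IsChain w i (insert i s) := by
    refine ⟨Finset.mem_insert_self _ _, ?_, ?_⟩
    · intro k hk
      rcases Finset.mem_insert.mp hk with rfl | hk
      · exact le_refl _
      · exact le_of_lt (lt_of_lt_of_le hij (hmin k hk))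
    · intro a ha b hb hab
      rcases Finset.mem_insert.mp hb with hb' | hb'
      · subst hb'
        rcases Finset.mem_insert.mp ha with ha' | ha'
        · subst ha'; exact absurd hab (lt_irrefl _)
        · exact absurd hab (not_lt.mpr (le_of_lt (hij.trans_le (hmin a ha'))))
      · rcases Finset.mem_insert.mp ha with ha' | ha'
        · subst ha'
          rcases eq_or_lt_of_le (hmin b hb') with h' | h'
          · rw [← h']; exact hw
          · exact hw.trans (hinc j hjs b hb' h')
        · exact hinc a ha' b hb' hab
  calc lisFrom w j + 1 = (insert i s).card := by
        rw [Finset.card_insert_of_notMem hi, hcard]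
    _ ≤ lisFrom w i := card_le_lisFrom hchain

lemma exists_next {w : Equiv.Perm (Fin n)} {i : Fin n} (h : 2 ≤ lisFrom w i) :
    ∃ j, i < j ∧ w i < w j ∧ lisFrom w i ≤ lisFrom w j + 1 := by
  obtain ⟨s, ⟨his, hmin, hinc⟩, hcard⟩ := exists_lis_chain w i
  have hne : (s.erase i).Nonempty := by
    rw [← Finset.card_pos, Finset.card_erase_of_mem his, hcard]
    omega
  set j := (s.erase i).min' hne with hj
  have hjs' : j ∈ s.erase i := Finset.min'_mem _ _
  have hjs : j ∈ s := Finset.mem_of_mem_erase hjs'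
  have hij : i < j := lt_of_le_of_ne (hmin j hjs) (Finset.ne_of_mem_erase hjs').symm
  refine ⟨j, hij, hinc i his j hjs hij, ?_⟩
  have hch : IsChain w j (s.erase i) :=
    ⟨hjs', fun k hk => Finset.min'_le _ k hk, fun a ha b hb hab =>
      hinc a (Finset.mem_of_mem_erase ha) b (Finset.mem_of_mem_erase hb) hab⟩
  have := card_le_lisFrom hch
  rw [Finset.card_erase_of_mem his, hcard] at this
  omega
/-! ### Fireworks iff `lisFrom` is nonincreasing -/

lemma fireworks_ascent_lt {w : Equiv.Perm (Fin n)} (hw : Fireworks w) {p : Fin n}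
    (h1 : (p : ℕ) + 1 < n) (ha : w p < w ⟨(p : ℕ) + 1, h1⟩) {i : Fin n} (hi : i ≤ p) :
    w i < w ⟨(p : ℕ) + 1, h1⟩ := by
  rcases eq_or_lt_of_le hi with rfl | hip
  · exact ha
  · by_contra hcon
    have hne : w i ≠ w ⟨(p : ℕ) + 1, h1⟩ := by
      intro h
      have h2 : (i : ℕ) = (p : ℕ) + 1 := by rw [w.injective h]
      have := Fin.le_def.mp hi
      omega
    have : w ⟨(p : ℕ) + 1, h1⟩ < w i := lt_of_le_of_ne (not_lt.mp hcon) (Ne.symm hne)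
    exact hw ⟨i, p, h1, hip, ha, this⟩

lemma fireworks_lis_ge {w : Equiv.Perm (Fin n)} (hw : Fireworks w) {p q : Fin n}
    (hpq : p < q) (hv : w q < w p) : lisFrom w q ≤ lisFrom w p := by
  suffices H : ∀ m : ℕ, ∀ q p : Fin n, n - (q : ℕ) ≤ m → p < q → w q < w p →
      lisFrom w q ≤ lisFrom w p from H n q p (by omega) hpq hv
  intro m
  induction m with
  | zero => intro q p hm; have := q.isLt; omega
  | succ m ih =>
    intro q p hm hpq hv
    by_cases h2 : 2 ≤ lisFrom w q
    · obtain ⟨r, hqr, hwr, hler⟩ := exists_next h2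
      by_cases hrp : w p < w r
      · have := lisFrom_succ_le (hpq.trans hqr) hrp
        omega
      · have hrp : w r < w p := lt_of_le_of_ne (not_lt.mp hrp) (fun heq => by
          have := w.injective heq
          subst this
          exact absurd (hpq.trans hqr) (lt_irrefl _))
        -- x0 : the first position after q whose value is ≥ w r
        set S : Finset (Fin n) := Finset.univ.filter (fun x => q < x ∧ w r ≤ w x) with hS
        have hrS : r ∈ S := by simp [hS, hqr]
        have hSne : S.Nonempty := ⟨r, hrS⟩
        set x0 := S.min' hSne with hx0
        have hx0S : x0 ∈ S := S.min'_mem hSne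
        obtain ⟨hqx0, hwx0⟩ : q < x0 ∧ w r ≤ w x0 := by simpa [hS] using hx0S
        have hx0r : x0 ≤ r := S.min'_le r hrS
        set y : Fin n := ⟨(x0 : ℕ) - 1, lt_of_le_of_lt (Nat.sub_le _ _) x0.isLt⟩ with hy
        have hqx0' : (q : ℕ) < (x0 : ℕ) := hqx0
        have hyx0 : (y : ℕ) + 1 = (x0 : ℕ) := by simp only [hy]; omega
        have hqy : q ≤ y := by rw [Fin.le_def]; simp only [hy]; omega
        have hwy : w y < w r := by
          rcases eq_or_lt_of_le hqy with h' | h'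
          · rw [← h']; exact hwr
          · by_contra hcon
            have hyS : y ∈ S := by
              simp only [hS, Finset.mem_filter, Finset.mem_univ, true_and]
              exact ⟨h', not_lt.mp hcon⟩
            have h'' : (x0 : ℕ) ≤ (y : ℕ) := S.min'_le y hyS
            omega
        have hx0y : x0 = ⟨(y : ℕ) + 1, by rw [hyx0]; exact x0.isLt⟩ := Fin.ext (by simp [hyx0])
        have hasc : w y < w ⟨(y : ℕ) + 1, by rw [hyx0]; exact x0.isLt⟩ := by
          rw [← hx0y]; exact hwy.trans_le hwx0
        have hpw : w p < w x0 := by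
          rw [hx0y]
          exact fireworks_ascent_lt hw _ hasc (le_of_lt (hpq.trans_le hqy))
        have h1 : lisFrom w x0 + 1 ≤ lisFrom w p := lisFrom_succ_le (hpq.trans hqx0) hpw
        have hrx0 : lisFrom w r ≤ lisFrom w x0 := by
          rcases eq_or_lt_of_le hx0r with h' | h'
          · rw [h']
          · refine ih r x0 ?_ h' (lt_of_le_of_ne hwx0 (fun heq => by
              have h2 := w.injective heq
              rw [h2] at h'
              exact absurd h' (lt_irrefl _)))
            have : (q : ℕ) < (r : ℕ) := hqr
            omega
        omega
    · have := one_le_lisFrom w p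
      omega

lemma fireworks_noninc {w : Equiv.Perm (Fin n)} (hw : Fireworks w) :
    ∀ p q : Fin n, p ≤ q → lisFrom w q ≤ lisFrom w p := by
  have adj : ∀ p q : Fin n, (q : ℕ) = (p : ℕ) + 1 → lisFrom w q ≤ lisFrom w p := by
    intro p q hpq1
    have hpq : p < q := by rw [Fin.lt_def]; omega
    rcases lt_or_gt_of_ne (w.injective.ne hpq.ne) with h | h
    · have := lisFrom_succ_le hpq h; omega
    · exact fireworks_lis_ge hw hpq h
  intro p q hpq
  obtain ⟨d, hd⟩ : ∃ d, (q : ℕ) = (p : ℕ) + d := ⟨(q : ℕ) - (p : ℕ), by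
    have := Fin.le_def.mp hpq; omega⟩
  clear hpq
  induction d generalizing q with
  | zero => have : p = q := Fin.ext (by omega); rw [this]
  | succ d ih =>
    have hq : (p : ℕ) + d < n := by have := q.isLt; omega
    exact le_trans (adj ⟨(p : ℕ) + d, hq⟩ q (by simp [hd]; omega)) (ih ⟨(p : ℕ) + d, hq⟩ (by simp))

lemma noninc_fireworks {w : Equiv.Perm (Fin n)}
    (hni : ∀ p q : Fin n, p ≤ q → lisFrom w q ≤ lisFrom w p) : Fireworks w := by
  intro hcon
  have hP : ∃ d : ℕ, ∃ (i j : Fin n) (h : (j : ℕ) + 1 < n),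
      i < j ∧ w j < w ⟨(j : ℕ) + 1, h⟩ ∧ w ⟨(j : ℕ) + 1, h⟩ < w i ∧ (j : ℕ) - (i : ℕ) = d := by
    obtain ⟨i, j, h, h1, h2, h3⟩ := hcon
    exact ⟨(j : ℕ) - (i : ℕ), i, j, h, h1, h2, h3, rfl⟩
  obtain ⟨i, j, h, hij, ha, hb, hd⟩ := Nat.find_spec hP
  set j1 : Fin n := ⟨(j : ℕ) + 1, h⟩ with hj1
  have hLj1 : lisFrom w j1 + 1 ≤ lisFrom w j := lisFrom_succ_le (by simp [hj1, Fin.lt_def]) ha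
  have hLij : lisFrom w j ≤ lisFrom w i := hni i j (le_of_lt hij)
  have h2 : 2 ≤ lisFrom w i := by have := one_le_lisFrom w j1; omega
  obtain ⟨r, hir, hwir, hler⟩ := exists_next h2
  rcases lt_trichotomy r j with hrj | hrj | hrj
  · -- smaller violation (r, j)
    have hmin := Nat.find_min hP (m := (j : ℕ) - (r : ℕ))
      (by have h1 := Fin.lt_def.mp hij; have h2 := Fin.lt_def.mp hir
          have h3 := Fin.lt_def.mp hrj; omega)
    exact hmin ⟨r, j, h, hrj, ha, hb.trans hwir, rfl⟩
  · subst hrj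
    exact absurd ((hwir.trans ha).trans hb) (lt_irrefl _)
  · have hj1r : j1 < r := by
      have h1 := Fin.lt_def.mp hrj
      have hne : (r : ℕ) ≠ (j : ℕ) + 1 := by
        intro h'
        have hrj1 : r = j1 := Fin.ext (by simp [hj1, h'])
        rw [hrj1] at hwir
        exact absurd (hb.trans hwir) (lt_irrefl _)
      rw [Fin.lt_def]; simp only [hj1]; omega
    have := lisFrom_succ_le hj1r (hb.trans hwir)
    omega
/-! ### `psum` and `blockIdx` API -/

lemma psum_mono (a : ℕ → ℕ) {m m' : ℕ} (h : m ≤ m') : psum a m ≤ psum a m' :=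
  Finset.sum_le_sum_of_subset (Finset.range_subset_range.mpr h)

lemma psum_succ (a : ℕ → ℕ) (m : ℕ) : psum a (m + 1) = psum a m + a m :=
  Finset.sum_range_succ a m

lemma blockIdx_lt {a : ℕ → ℕ} (hn : psum a n = n) (i : Fin n) : blockIdx n a i < n := by
  have hn0 : 0 < n := i.pos
  have hsub : (Finset.range n).filter (fun m => psum a (m + 1) ≤ (i : ℕ)) ⊆
      Finset.range (n - 1) := by
    intro b hb
    simp only [Finset.mem_filter, Finset.mem_range] at hb ⊢
    obtain ⟨hbn, hble⟩ := hb
    by_contra hcon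
    have hb1 : n ≤ b + 1 := by omega
    have := psum_mono a hb1
    rw [hn] at this
    have := i.isLt
    omega
  calc blockIdx n a i ≤ (Finset.range (n - 1)).card := Finset.card_le_card hsub
    _ < n := by rw [Finset.card_range]; omega

lemma blockIdx_eq_of {a : ℕ → ℕ} (hn : psum a n = n) (i : Fin n) {k : ℕ}
    (h1 : psum a k ≤ (i : ℕ)) (h2 : (i : ℕ) < psum a (k + 1)) : blockIdx n a i = k := by
  have hkn : k ≤ n := by
    by_contra hcon
    have := psum_mono a (le_of_lt (not_le.mp hcon))
    rw [hn] at this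
    have := i.isLt
    omega
  have : (Finset.range n).filter (fun m => psum a (m + 1) ≤ (i : ℕ)) = Finset.range k := by
    ext b
    simp only [Finset.mem_filter, Finset.mem_range]
    constructor
    · rintro ⟨hbn, hble⟩
      by_contra hcon
      have : k + 1 ≤ b + 1 := by omega
      have := psum_mono a this
      omega
    · intro hbk
      have hb1 : b + 1 ≤ k := hbk
      refine ⟨?_, le_trans (psum_mono a hb1) h1⟩
      · have := i.isLt; omega
  rw [blockIdx, this, Finset.card_range]

lemma blockIdx_spec {a : ℕ → ℕ} (hn : psum a n = n) (i : Fin n) :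
    psum a (blockIdx n a i) ≤ (i : ℕ) ∧ (i : ℕ) < psum a (blockIdx n a i + 1) := by
  set S := (Finset.range n).filter (fun m => psum a (m + 1) ≤ (i : ℕ)) with hS
  have hcard : S.card = blockIdx n a i := rfl
  constructor
  · rcases Nat.eq_zero_or_pos (blockIdx n a i) with h0 | h0
    · rw [h0]; exact Nat.zero_le _
    · have hne : S.Nonempty := by rw [← Finset.card_pos, hcard]; exact h0
      set M := S.max' hne with hM
      have hMS : M ∈ S := S.max'_mem hne
      have hMle : psum a (M + 1) ≤ (i : ℕ) := (Finset.mem_filter.mp hMS).2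
      have hcardM : S.card ≤ M + 1 := by
        refine le_trans (Finset.card_le_card (fun b hb => ?_)) (by rw [Finset.card_range])
        exact Finset.mem_range.mpr (Nat.lt_succ_of_le (S.le_max' b hb))
      exact le_trans (psum_mono a (by omega)) hMle
  · by_contra hcon
    have hsub : Finset.range (blockIdx n a i + 1) ⊆ S := by
      intro b hb
      simp only [Finset.mem_range] at hb
      simp only [hS, Finset.mem_filter, Finset.mem_range]
      have hb1 : b + 1 ≤ blockIdx n a i + 1 := hb
      refine ⟨?_, le_trans (psum_mono a hb1) (not_lt.mp hcon)⟩
      have := blockIdx_lt hn i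
      omega
    have := Finset.card_le_card hsub
    rw [Finset.card_range, hcard] at this
    omega

lemma blockIdx_mono {a : ℕ → ℕ} {i j : Fin n} (h : i ≤ j) :
    blockIdx n a i ≤ blockIdx n a j := by
  refine Finset.card_le_card (fun b hb => ?_)
  simp only [Finset.mem_filter, Finset.mem_range] at hb ⊢
  exact ⟨hb.1, le_trans hb.2 h⟩
/-! ### Nonincreasing sequences with equal fibers are equal -/

lemma card_filter_split (g : Fin n → ℕ) (v : ℕ) :
    (Finset.univ.filter fun i => v ≤ g i).card =
      (Finset.univ.filter fun i => v + 1 ≤ g i).card +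
        (Finset.univ.filter fun i => g i = v).card := by
  rw [← Finset.card_union_of_disjoint (by
    simp only [Finset.disjoint_left, Finset.mem_filter, Finset.mem_univ, true_and]
    intro x h1 h2
    omega)]
  congr 1
  ext i
  simp only [Finset.mem_union, Finset.mem_filter, Finset.mem_univ, true_and]
  omega

lemma noninc_ge_iff {g : Fin n → ℕ} (hg : ∀ p q : Fin n, p ≤ q → g q ≤ g p)
    (v : ℕ) (i : Fin n) :
    v ≤ g i ↔ (i : ℕ) < (Finset.univ.filter fun j => v ≤ g j).card := by
  constructor
  · intro h
    have hsub : Finset.Iic i ⊆ Finset.univ.filter fun j => v ≤ g j := by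
      intro j hj
      simp only [Finset.mem_filter, Finset.mem_univ, true_and]
      exact le_trans h (hg j i (Finset.mem_Iic.mp hj))
    have := Finset.card_le_card hsub
    rw [Fin.card_Iic] at this
    omega
  · intro h
    by_contra hcon
    have hsub : (Finset.univ.filter fun j => v ≤ g j) ⊆ Finset.Iio i := by
      intro j hj
      simp only [Finset.mem_filter, Finset.mem_univ, true_and] at hj
      rw [Finset.mem_Iio]
      by_contra hji
      exact hcon (le_trans hj (hg i j (not_lt.mp hji)))
    have := Finset.card_le_card hsub
    rw [Fin.card_Iio] at this
    omega

lemma noninc_fiber_eq {g h : Fin n → ℕ}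
    (hg : ∀ p q : Fin n, p ≤ q → g q ≤ g p) (hh : ∀ p q : Fin n, p ≤ q → h q ≤ h p)
    (hgb : ∀ i, g i ≤ n) (hhb : ∀ i, h i ≤ n)
    (hfib : ∀ m : ℕ, (Finset.univ.filter fun i => g i = m).card =
      (Finset.univ.filter fun i => h i = m).card) (i : Fin n) : g i = h i := by
  have key : ∀ d v : ℕ, n + 1 ≤ v + d →
      (Finset.univ.filter fun j => v ≤ g j).card =
        (Finset.univ.filter fun j => v ≤ h j).card := by
    intro d
    induction d with
    | zero =>
      intro v hv
      have h1 : (Finset.univ.filter fun j => v ≤ g j) = ∅ := by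
        rw [Finset.filter_eq_empty_iff]
        intro j _
        have := hgb j
        omega
      have h2 : (Finset.univ.filter fun j => v ≤ h j) = ∅ := by
        rw [Finset.filter_eq_empty_iff]
        intro j _
        have := hhb j
        omega
      rw [h1, h2]
    | succ d ih =>
      intro v hv
      rcases Nat.lt_or_ge n (v + d) with h' | h'
      · exact ih v (by omega)
      · rw [card_filter_split g v, card_filter_split h v, ih (v + 1) (by omega), hfib v]
  have hcard : ∀ v : ℕ, (Finset.univ.filter fun j => v ≤ g j).card =
      (Finset.univ.filter fun j => v ≤ h j).card := fun v => key (n + 1) v (by omega)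
  have h1 : g i ≤ h i := by
    rw [noninc_ge_iff hh (g i) i, ← hcard (g i), ← noninc_ge_iff hg (g i) i]
  have h2 : h i ≤ g i := by
    rw [noninc_ge_iff hg (h i) i, hcard (h i), ← noninc_ge_iff hh (h i) i]
  omega

/-- Two propositionally equal filters have the same cardinality. -/
lemma filter_card_congr {p q : Fin n → Prop} [DecidablePred p] [DecidablePred q]
    (h : ∀ i, p i ↔ q i) :
    (Finset.univ.filter p).card = (Finset.univ.filter q).card := by
  congr 1
  ext i
  simp only [Finset.mem_filter, Finset.mem_univ, true_and]
  exact h i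

/-- Reindexing a filter-count by a permutation. -/
lemma card_filter_perm (σ : Equiv.Perm (Fin n)) (P : Fin n → Prop)
    [DecidablePred P] [DecidablePred fun i => P (σ i)] :
    (Finset.univ.filter fun i => P (σ i)).card = (Finset.univ.filter fun v => P v).card := by
  refine Finset.card_bij (fun i _ => σ i) ?_ ?_ ?_
  · intro i hi
    simp only [Finset.mem_filter, Finset.mem_univ, true_and] at hi ⊢
    exact hi
  · intro i hi j hj hij
    exact σ.injective hij
  · intro v hv
    simp only [Finset.mem_filter, Finset.mem_univ, true_and] at hv
    exact ⟨σ.symm v, by simp only [Finset.mem_filter, Finset.mem_univ, true_and,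
      Equiv.apply_symm_apply]; exact hv, by simp⟩
/-! ### Structure of the layered permutation -/

lemma key_inj {a : ℕ → ℕ} (hn0 : 0 < n) :
    Function.Injective (fun v : Fin n => n * blockIdx n a v + (n - 1 - (v : ℕ))) := by
  intro v v' h
  simp only at h
  have hv := v.isLt
  have hv' := v'.isLt
  have hb : blockIdx n a v = blockIdx n a v' := by
    rcases lt_trichotomy (blockIdx n a v) (blockIdx n a v') with h' | h' | h'
    · exfalso; have h2 : n * (blockIdx n a v + 1) ≤ n * blockIdx n a v' := Nat.mul_le_mul_left n h'
      have h3 : n * (blockIdx n a v + 1) = n * blockIdx n a v + n := Nat.mul_succ n _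
      omega
    · exact h'
    · exfalso; have h2 : n * (blockIdx n a v' + 1) ≤ n * blockIdx n a v := Nat.mul_le_mul_left n h'
      have h3 : n * (blockIdx n a v' + 1) = n * blockIdx n a v' + n := Nat.mul_succ n _
      omega
  rw [hb] at h
  exact Fin.ext (by omega)

lemma layered_key_strictMono {a : ℕ → ℕ} (hn0 : 0 < n) :
    StrictMono (fun i : Fin n =>
      n * blockIdx n a (layered n a i) + (n - 1 - ((layered n a i : Fin n) : ℕ))) := by
  have hmono := Tuple.monotone_sort
    (fun v : Fin n => n * blockIdx n a v + (n - 1 - (v : ℕ)))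
  exact hmono.strictMono_of_injective ((key_inj hn0).comp (layered n a).injective)

lemma layered_block_mono {a : ℕ → ℕ} {i j : Fin n} (hij : i ≤ j) :
    blockIdx n a (layered n a i) ≤ blockIdx n a (layered n a j) := by
  rcases eq_or_lt_of_le hij with rfl | hij
  · exact le_refl _
  · have hn0 : 0 < n := i.pos
    have hkey := layered_key_strictMono (a := a) hn0 hij
    by_contra hcon
    have h' : blockIdx n a (layered n a j) + 1 ≤ blockIdx n a (layered n a i) :=
      not_le.mp hcon
    have h4 := Nat.mul_le_mul_left n h'
    have h3 : n * (blockIdx n a (layered n a j) + 1) = n * blockIdx n a (layered n a j) + n :=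
      Nat.mul_succ n _
    have h1 := (layered n a i).isLt
    have h2 := (layered n a j).isLt
    simp only at hkey
    omega

lemma layered_desc_of_block_eq {a : ℕ → ℕ} {i j : Fin n} (hij : i < j)
    (hb : blockIdx n a (layered n a i) = blockIdx n a (layered n a j)) :
    layered n a j < layered n a i := by
  have hn0 : 0 < n := i.pos
  have hkey := layered_key_strictMono (a := a) hn0 hij
  simp only [hb] at hkey
  have h1 := (layered n a i).isLt
  have h2 := (layered n a j).isLt
  rw [Fin.lt_def]
  omega

lemma layered_asc_of_block_lt {a : ℕ → ℕ} {i j : Fin n} (hb :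
    blockIdx n a (layered n a i) < blockIdx n a (layered n a j)) :
    layered n a i < layered n a j := by
  rcases lt_trichotomy (layered n a i) (layered n a j) with h | h | h
  · exact h
  · rw [h] at hb; exact absurd hb (lt_irrefl _)
  · exact absurd (blockIdx_mono (a := a) (le_of_lt h)) (not_le.mpr hb)

lemma layered_block_apply {a : ℕ → ℕ} (hn : psum a n = n) (i : Fin n) :
    blockIdx n a (layered n a i) = blockIdx n a i := by
  have hg : ∀ i : Fin n, n - blockIdx n a (layered n a i) ≤ n := fun _ => Nat.sub_le _ _
  have key := noninc_fiber_eq (n := n)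
    (g := fun i => n - blockIdx n a (layered n a i)) (h := fun i => n - blockIdx n a i)
    (fun p q hpq => Nat.sub_le_sub_left (layered_block_mono hpq) n)
    (fun p q hpq => Nat.sub_le_sub_left (blockIdx_mono hpq) n)
    hg (fun _ => Nat.sub_le _ _)
    (fun m => card_filter_perm (layered n a) (fun v => n - blockIdx n a v = m)) i
  have h1 := blockIdx_lt hn (layered n a i)
  have h2 := blockIdx_lt hn i
  omega

lemma layered_desc' {a : ℕ → ℕ} (hn : psum a n = n) {i j : Fin n} (hij : i < j)
    (hb : blockIdx n a i = blockIdx n a j) : layered n a j < layered n a i :=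
  layered_desc_of_block_eq hij (by
    rw [layered_block_apply hn, layered_block_apply hn]; exact hb)

lemma layered_asc' {a : ℕ → ℕ} (hn : psum a n = n) {i j : Fin n}
    (hb : blockIdx n a i < blockIdx n a j) : layered n a i < layered n a j :=
  layered_asc_of_block_lt (by
    rw [layered_block_apply hn, layered_block_apply hn]; exact hb)

lemma layered_invol {a : ℕ → ℕ} (hn : psum a n = n) (i : Fin n) :
    layered n a (layered n a i) = i := by
  set e := layered n a with he
  have hsm : StrictMono (fun i => e (e i)) := by
    intro i j hij
    simp only
    rcases eq_or_lt_of_le (blockIdx_mono (a := a) (le_of_lt hij)) with hb | hb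
    · have h1 : e j < e i := layered_desc' hn hij hb
      have h2 : blockIdx n a (e j) = blockIdx n a (e i) := by
        rw [layered_block_apply hn, layered_block_apply hn, hb]
      exact layered_desc' hn h1 h2
    · have h1 : e i < e j := layered_asc' hn hb
      have h2 : blockIdx n a (e i) < blockIdx n a (e j) := by
        rw [layered_block_apply hn, layered_block_apply hn]; exact hb
      exact layered_asc' hn h2
  -- a strictly monotone bijection of `Fin n` is the identity
  have := Tuple.unique_monotone (f := (id : Fin n → Fin n)) (σ := e.trans e) (τ := Equiv.refl _)
    (by simpa [Function.comp_def] using hsm.monotone) (by simpa using monotone_id)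
  have := congrFun this i
  simpa [Equiv.trans_apply] using this

lemma layered_inv {a : ℕ → ℕ} (hn : psum a n = n) :
    (layered n a)⁻¹ = layered n a := by
  have h : layered n a * layered n a = 1 := Equiv.ext fun i => layered_invol hn i
  exact (eq_inv_of_mul_eq_one_left h).symm
/-! ### Inversion sets and the weak orders -/

/-- The set of inversions (as pairs of positions) of `w`. -/
def invSet (w : Equiv.Perm (Fin n)) : Finset (Fin n × Fin n) :=
  Finset.univ.filter fun p : Fin n × Fin n => p.1 < p.2 ∧ w p.2 < w p.1

lemma invNum_eq_card (w : Equiv.Perm (Fin n)) : invNum w = (invSet w).card := rfl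

lemma mem_invSet {w : Equiv.Perm (Fin n)} {p : Fin n × Fin n} :
    p ∈ invSet w ↔ p.1 < p.2 ∧ w p.2 < w p.1 := by
  simp [invSet]

lemma invNum_mul_inv (w u : Equiv.Perm (Fin n)) :
    invNum (w * u⁻¹) = ((invSet w \ invSet u) ∪ (invSet u \ invSet w)).card := by
  rw [invNum_eq_card]
  refine Finset.card_bij'
    (fun p _ => if u⁻¹ p.1 < u⁻¹ p.2 then (u⁻¹ p.1, u⁻¹ p.2) else (u⁻¹ p.2, u⁻¹ p.1))
    (fun q _ => if u q.1 < u q.2 then (u q.1, u q.2) else (u q.2, u q.1)) ?_ ?_ ?_ ?_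
  · intro p hp
    rw [mem_invSet] at hp
    obtain ⟨h12, hw⟩ := hp
    simp only [Equiv.Perm.mul_apply] at hw
    simp only [Finset.mem_union, Finset.mem_sdiff, mem_invSet]
    have hne : u⁻¹ p.1 ≠ u⁻¹ p.2 := fun h => absurd (u⁻¹.injective h ▸ h12) (lt_irrefl _)
    have hu1 : u (u⁻¹ p.1) = p.1 := u.apply_inv_self p.1
    have hu2 : u (u⁻¹ p.2) = p.2 := u.apply_inv_self p.2
    split_ifs with hxy
    · left
      refine ⟨⟨hxy, hw⟩, ?_⟩
      intro ⟨_, hcon⟩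
      rw [hu1, hu2] at hcon
      exact absurd (h12.trans hcon) (lt_irrefl _)
    · have hyx : u⁻¹ p.2 < u⁻¹ p.1 := lt_of_le_of_ne (not_lt.mp hxy) hne.symm
      right
      refine ⟨⟨hyx, by rw [hu1, hu2]; exact h12⟩, ?_⟩
      intro ⟨_, hcon⟩
      exact absurd (hw.trans hcon) (lt_irrefl _)
  · intro q hq
    simp only [Finset.mem_union, Finset.mem_sdiff, mem_invSet] at hq
    rw [mem_invSet]
    beta_reduce
    rcases hq with ⟨⟨h12, hw⟩, hnu⟩ | ⟨⟨h12, hu⟩, hnw⟩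
    · have hult : u q.1 < u q.2 := by
        rcases lt_trichotomy (u q.1) (u q.2) with h | h | h
        · exact h
        · exact absurd (u.injective h ▸ h12) (lt_irrefl _)
        · exact absurd ⟨h12, h⟩ hnu
      rw [if_pos hult]
      exact ⟨hult, by simp only [Equiv.Perm.mul_apply, Equiv.Perm.inv_apply_self]; exact hw⟩
    · have hwlt : w q.1 < w q.2 := by
        rcases lt_trichotomy (w q.1) (w q.2) with h | h | h
        · exact h
        · exact absurd (w.injective h ▸ h12) (lt_irrefl _)
        · exact absurd ⟨h12, h⟩ hnw
      have : ¬ u q.1 < u q.2 := not_lt.mpr (le_of_lt hu)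
      rw [if_neg this]
      exact ⟨hu, by simp only [Equiv.Perm.mul_apply, Equiv.Perm.inv_apply_self]; exact hwlt⟩
  · intro p hp
    rw [mem_invSet] at hp
    obtain ⟨h12, _⟩ := hp
    beta_reduce
    by_cases hxy : u⁻¹ p.1 < u⁻¹ p.2
    · rw [if_pos hxy]
      simp only [Equiv.Perm.apply_inv_self]
      rw [if_pos h12]
    · rw [if_neg hxy]
      simp only [Equiv.Perm.apply_inv_self]
      rw [if_neg (not_lt.mpr (le_of_lt h12))]
  · intro q hq
    simp only [Finset.mem_union, Finset.mem_sdiff, mem_invSet] at hq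
    have h12 : q.1 < q.2 := by rcases hq with ⟨⟨h, _⟩, _⟩ | ⟨⟨h, _⟩, _⟩ <;> exact h
    beta_reduce
    by_cases h : u q.1 < u q.2
    · rw [if_pos h]
      simp only [Equiv.Perm.inv_apply_self]
      rw [if_pos h12]
    · rw [if_neg h]
      simp only [Equiv.Perm.inv_apply_self]
      rw [if_neg (not_lt.mpr (le_of_lt h12))]
lemma leL_iff {u w : Equiv.Perm (Fin n)} : leL u w ↔ invSet u ⊆ invSet w := by
  constructor
  · rintro ⟨v, hv, hsum⟩
    have hv' : v = w * u⁻¹ := by rw [hv, mul_inv_cancel_right]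
    rw [hv', invNum_mul_inv, invNum_eq_card, invNum_eq_card,
      Finset.card_union_of_disjoint disjoint_sdiff_sdiff] at hsum
    have e1 : (invSet w \ invSet u).card + (invSet w ∩ invSet u).card = (invSet w).card :=
      Finset.card_sdiff_add_card_inter _ _
    have e2 : (invSet u \ invSet w).card + (invSet u ∩ invSet w).card = (invSet u).card :=
      Finset.card_sdiff_add_card_inter _ _
    have e3 : (invSet w ∩ invSet u).card = (invSet u ∩ invSet w).card := by
      rw [Finset.inter_comm]
    have h0 : (invSet u \ invSet w).card = 0 := by omega
    rw [Finset.card_eq_zero] at h0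
    exact Finset.sdiff_eq_empty_iff_subset.mp h0
  · intro hsub
    refine ⟨w * u⁻¹, by rw [inv_mul_cancel_right], ?_⟩
    rw [invNum_mul_inv, Finset.sdiff_eq_empty_iff_subset.mpr hsub, Finset.union_empty,
      invNum_eq_card, invNum_eq_card]
    exact (Finset.card_sdiff_add_card_eq_card hsub).symm

lemma invNum_inv (w : Equiv.Perm (Fin n)) : invNum w⁻¹ = invNum w := by
  rw [invNum_eq_card, invNum_eq_card]
  refine Finset.card_bij' (fun p _ => (w⁻¹ p.2, w⁻¹ p.1)) (fun q _ => (w q.2, w q.1))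
    ?_ ?_ ?_ ?_
  · intro p hp
    rw [mem_invSet] at hp ⊢
    beta_reduce
    exact ⟨hp.2, by simp only [Equiv.Perm.apply_inv_self]; exact hp.1⟩
  · intro q hq
    rw [mem_invSet] at hq ⊢
    beta_reduce
    exact ⟨hq.2, by simp only [Equiv.Perm.inv_apply_self]; exact hq.1⟩
  · intro p hp
    simp
  · intro q hq
    simp

lemma leR_iff_leL_inv {u w : Equiv.Perm (Fin n)} : leR u w ↔ leL u⁻¹ w⁻¹ := by
  constructor
  · rintro ⟨v, hv, hsum⟩
    refine ⟨v⁻¹, by rw [hv, mul_inv_rev], ?_⟩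
    rw [invNum_inv, invNum_inv, invNum_inv, hsum, Nat.add_comm]
  · rintro ⟨v, hv, hsum⟩
    refine ⟨v⁻¹, ?_, ?_⟩
    · have : w⁻¹⁻¹ = (v * u⁻¹)⁻¹ := by rw [hv]
      rw [inv_inv, mul_inv_rev, inv_inv] at this
      exact this
    · rw [invNum_inv, invNum_inv] at hsum
      rw [invNum_inv, hsum, Nat.add_comm]
/-! ### `lisFrom` and `shape` under inversion -/

lemma lisFrom_inv_ge (w : Equiv.Perm (Fin n)) (i : Fin n) :
    lisFrom w (w⁻¹ i) ≤ lisFrom w⁻¹ i := by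
  obtain ⟨s, ⟨his, hmin, hinc⟩, hcard⟩ := exists_lis_chain w (w⁻¹ i)
  rw [← hcard]
  have himg : IsChain w⁻¹ i (s.image w) := by
    refine ⟨?_, ?_, ?_⟩
    · exact Finset.mem_image.mpr ⟨w⁻¹ i, his, w.apply_inv_self i⟩
    · intro b hb
      obtain ⟨k, hk, rfl⟩ := Finset.mem_image.mp hb
      rcases eq_or_lt_of_le (hmin k hk) with h' | h'
      · rw [← h', w.apply_inv_self]
      · exact le_of_lt ((w.apply_inv_self i) ▸ hinc (w⁻¹ i) his k hk h')
    · intro b hb c hc hbc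
      obtain ⟨k, hk, rfl⟩ := Finset.mem_image.mp hb
      obtain ⟨l, hl, rfl⟩ := Finset.mem_image.mp hc
      simp only [Equiv.Perm.inv_apply_self]
      rcases lt_trichotomy k l with h' | h' | h'
      · exact h'
      · rw [h'] at hbc; exact absurd hbc (lt_irrefl _)
      · exact absurd (hinc l hl k hk h') (not_lt.mpr (le_of_lt hbc))
  calc s.card = (s.image w).card := (Finset.card_image_of_injective s w.injective).symm
    _ ≤ lisFrom w⁻¹ i := card_le_lisFrom himg

lemma lisFrom_inv (w : Equiv.Perm (Fin n)) (i : Fin n) :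
    lisFrom w⁻¹ i = lisFrom w (w⁻¹ i) := by
  refine le_antisymm ?_ (lisFrom_inv_ge w i)
  have := lisFrom_inv_ge w⁻¹ (w⁻¹ i)
  simpa using this

lemma eps_eq (w : Equiv.Perm (Fin n)) (i : Fin n) : eps w i = n + 1 - lisFrom w i := by
  have h1 := lisFrom_le w i
  have h2 := one_le_lisFrom w i
  have h3 := i.isLt
  rw [eps, rajCode]
  omega

lemma shape_inv (w : Equiv.Perm (Fin n)) : shape w⁻¹ = shape w := by
  funext k
  rw [shape, shape]
  rw [filter_card_congr (q := fun i => eps w (w⁻¹ i) = (k : ℕ) + 1) (fun i => by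
    rw [eps_eq, eps_eq, lisFrom_inv])]
  exact card_filter_perm w⁻¹ (fun v => eps w v = (k : ℕ) + 1)
/-! ### Translating `shape` into fibers of `lisFrom` -/

lemma card_val_Ico (c d : ℕ) (hd : d ≤ n) :
    (Finset.univ.filter fun i : Fin n => c ≤ (i : ℕ) ∧ (i : ℕ) < d).card = d - c := by
  rw [← Nat.card_Ico c d]
  refine Finset.card_bij' (fun i _ => (i : ℕ))
    (fun x hx => ⟨x, lt_of_lt_of_le (Finset.mem_Ico.mp hx).2 hd⟩) ?_ ?_ ?_ ?_
  · intro i hi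
    simp only [Finset.mem_filter, Finset.mem_univ, true_and] at hi
    exact Finset.mem_Ico.mpr hi
  · intro x hx
    simp only [Finset.mem_filter, Finset.mem_univ, true_and]
    exact ⟨(Finset.mem_Ico.mp hx).1, (Finset.mem_Ico.mp hx).2⟩
  · intro i hi; rfl
  · intro x hx; rfl

lemma blockIdx_fiber {a : ℕ → ℕ} (hn : psum a n = n) (k : Fin n) :
    (Finset.univ.filter fun i : Fin n => blockIdx n a i = (k : ℕ)).card = a (k : ℕ) := by
  rw [filter_card_congr (q := fun i : Fin n => psum a (k : ℕ) ≤ (i : ℕ) ∧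
      (i : ℕ) < psum a ((k : ℕ) + 1)) (fun i => by
    constructor
    · intro h
      have := blockIdx_spec hn i
      rw [h] at this
      exact this
    · intro ⟨h1, h2⟩
      exact blockIdx_eq_of hn i h1 h2)]
  rw [card_val_Ico _ _ (by
    have h1 : (k : ℕ) + 1 ≤ n := k.isLt
    have := psum_mono a h1
    omega)]
  rw [psum_succ]
  omega

lemma shapeCount (w : Equiv.Perm (Fin n)) (k : Fin n) :
    shape w k = (Finset.univ.filter fun i => lisFrom w i = n - (k : ℕ)).card := by
  rw [shape]
  refine filter_card_congr (fun i => ?_)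
  rw [eps_eq]
  have h1 := lisFrom_le_n w i
  have h2 := one_le_lisFrom w i
  have h3 := k.isLt
  omega

lemma lambda_fiber {a : ℕ → ℕ} (hn : psum a n = n) {α : Fin n → ℕ}
    (hA : ∀ k : Fin n, a (k : ℕ) = α k) {m : ℕ} (h1 : 1 ≤ m) (h2 : m ≤ n) :
    (Finset.univ.filter fun i : Fin n => n - blockIdx n a i = m).card
      = α ⟨n - m, by omega⟩ := by
  rw [filter_card_congr (q := fun i : Fin n => blockIdx n a i = n - m) (fun i => by
    have := blockIdx_lt hn i
    omega)]
  rw [blockIdx_fiber hn ⟨n - m, by omega⟩]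
  exact hA _

lemma shape_eq_of_pointwise {a : ℕ → ℕ} (hn : psum a n = n) {α : Fin n → ℕ}
    (hA : ∀ k : Fin n, a (k : ℕ) = α k) (w : Equiv.Perm (Fin n))
    (hpt : ∀ i, lisFrom w i = n - blockIdx n a i) : shape w = α := by
  funext k
  rw [shapeCount]
  rw [filter_card_congr (q := fun i : Fin n => n - blockIdx n a i = n - (k : ℕ))
    (fun i => by rw [hpt i])]
  have hk := k.isLt
  rw [lambda_fiber hn hA (by omega) (by omega)]
  congr 1
  exact Fin.ext (by simp; omega)

lemma fibers_of_shape {a : ℕ → ℕ} (hn : psum a n = n) {α : Fin n → ℕ}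
    (hA : ∀ k : Fin n, a (k : ℕ) = α k) (w : Equiv.Perm (Fin n))
    (hsh : shape w = α) (m : ℕ) :
    (Finset.univ.filter fun i => lisFrom w i = m).card =
      (Finset.univ.filter fun i : Fin n => n - blockIdx n a i = m).card := by
  by_cases hm : 1 ≤ m ∧ m ≤ n
  · rw [lambda_fiber hn hA hm.1 hm.2]
    have := congrFun hsh ⟨n - m, by omega⟩
    rw [shapeCount] at this
    simp only at this
    rw [show n - (n - m) = m by omega] at this
    exact this
  · have e1 : (Finset.univ.filter fun i : Fin n => lisFrom w i = m) = ∅ := by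
      rw [Finset.filter_eq_empty_iff]
      intro i _
      have := lisFrom_le_n w i
      have := one_le_lisFrom w i
      omega
    have e2 : (Finset.univ.filter fun i : Fin n => n - blockIdx n a i = m) = ∅ := by
      rw [Finset.filter_eq_empty_iff]
      intro i _
      have := blockIdx_lt hn i
      omega
    rw [e1, e2]
/-! ### The combinatorial heart: pointwise `lisFrom` values vs block conditions -/

lemma X1_desc {a : ℕ → ℕ} (hn : psum a n = n) {w : Equiv.Perm (Fin n)}
    (hpt : ∀ i, lisFrom w i = n - blockIdx n a i) :
    ∀ i j : Fin n, i < j → blockIdx n a i = blockIdx n a j → w j < w i := by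
  intro i j hij hb
  rcases lt_trichotomy (w j) (w i) with h | h | h
  · exact h
  · exact absurd (w.injective h) (by intro h'; rw [h'] at hij; exact absurd hij (lt_irrefl _))
  · exfalso
    have := lisFrom_succ_le hij h
    rw [hpt i, hpt j, hb] at this
    have := blockIdx_lt hn j
    omega

lemma X2_lrmax {a : ℕ → ℕ} (hn : psum a n = n) {w : Equiv.Perm (Fin n)}
    (hpt : ∀ i, lisFrom w i = n - blockIdx n a i) :
    ∀ j : Fin n, (∀ i : Fin n, i < j → blockIdx n a i < blockIdx n a j) →
      ∀ i, i < j → w i < w j := by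
  intro j hbm i hij
  by_contra hcon
  have hji : w j < w i := lt_of_le_of_ne (not_lt.mp hcon) (fun h => by
    rw [w.injective h] at hij; exact absurd hij (lt_irrefl _))
  set S : Finset (Fin n) := Finset.univ.filter (fun x => x < j ∧ w j < w x) with hS
  have hiS : i ∈ S := by simp [hS, hij, hji]
  have hSne : S.Nonempty := ⟨i, hiS⟩
  set x := S.max' hSne with hx
  obtain ⟨hxj, hwx⟩ : x < j ∧ w j < w x := by
    have h := S.max'_mem hSne
    exact (Finset.mem_filter.mp h).2
  have hBj := blockIdx_lt hn j
  have hBx : blockIdx n a x < blockIdx n a j := hbm x hxj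
  have hlisx : lisFrom w j + 1 ≤ lisFrom w x := by rw [hpt x, hpt j]; omega
  have h2 : 2 ≤ lisFrom w x := by have := one_le_lisFrom w j; omega
  obtain ⟨r, hxr, hwr, hler⟩ := exists_next h2
  rcases lt_trichotomy r j with h' | h' | h'
  · have hrS : r ∈ S := by
      simp only [hS, Finset.mem_filter, Finset.mem_univ, true_and]
      exact ⟨h', hwx.trans hwr⟩
    exact absurd (S.le_max' r hrS) (not_le.mpr hxr)
  · rw [h'] at hwr
    exact absurd (hwx.trans hwr) (lt_irrefl _)
  · have := lisFrom_succ_le h' (hwx.trans hwr)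
    omega

lemma X3_le {a : ℕ → ℕ} (hn : psum a n = n) {w : Equiv.Perm (Fin n)}
    (hdec : ∀ i j : Fin n, i < j → blockIdx n a i = blockIdx n a j → w j < w i) :
    ∀ i, lisFrom w i ≤ n - blockIdx n a i := by
  intro i
  obtain ⟨s, ⟨his, hmin, hinc⟩, hcard⟩ := exists_lis_chain w i
  rw [← hcard]
  have hstrict : ∀ j ∈ s, ∀ k ∈ s, j < k → blockIdx n a j < blockIdx n a k := by
    intro j hj k hk hjk
    rcases eq_or_lt_of_le (blockIdx_mono (a := a) (le_of_lt hjk)) with h' | h'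
    · exact absurd (hinc j hj k hk hjk) (not_lt.mpr (le_of_lt (hdec j k hjk h')))
    · exact h'
  have hinj : Set.InjOn (fun j : Fin n => n - blockIdx n a j) ↑s := by
    intro j hj k hk hjk
    simp only at hjk
    rcases lt_trichotomy j k with h' | h' | h'
    · have := hstrict j hj k hk h'
      have := blockIdx_lt hn k
      omega
    · exact h'
    · have := hstrict k hk j hj h'
      have := blockIdx_lt hn j
      omega
  rw [← Finset.card_image_of_injOn hinj]
  have hsub : s.image (fun j : Fin n => n - blockIdx n a j) ⊆
      Finset.Icc 1 (n - blockIdx n a i) := by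
    intro m hm
    obtain ⟨j, hj, rfl⟩ := Finset.mem_image.mp hm
    rw [Finset.mem_Icc]
    have h1 := blockIdx_lt hn j
    have h2 : blockIdx n a i ≤ blockIdx n a j := blockIdx_mono (hmin j hj)
    omega
  calc (s.image _).card ≤ (Finset.Icc 1 (n - blockIdx n a i)).card :=
        Finset.card_le_card hsub
    _ = n - blockIdx n a i := by rw [Nat.card_Icc]; omega

lemma X4_ge {a : ℕ → ℕ} (hn : psum a n = n)
    (hsupp : ∀ b b' : ℕ, b ≤ b' → b' < n → 1 ≤ a b → 1 ≤ a b')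
    {w : Equiv.Perm (Fin n)}
    (hLR : ∀ j : Fin n, (∀ i : Fin n, i < j → blockIdx n a i < blockIdx n a j) →
      ∀ i, i < j → w i < w j) :
    ∀ i, n - blockIdx n a i ≤ lisFrom w i := by
  suffices H : ∀ d : ℕ, ∀ j : Fin n, n - blockIdx n a j ≤ d →
      n - blockIdx n a j ≤ lisFrom w j by
    intro i; exact H n i (by omega)
  intro d
  induction d with
  | zero => intro j h; omega
  | succ d ih =>
    intro j hd
    have hBj := blockIdx_lt hn j
    rcases Nat.lt_or_ge (blockIdx n a j) (n - 1) with hb | hb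
    · -- there is a next block
      set b' := blockIdx n a j + 1 with hb'
      have hspecj := blockIdx_spec hn j
      rw [← hb'] at hspecj
      have hab : 1 ≤ a (blockIdx n a j) := by
        have h6 := psum_succ a (blockIdx n a j)
        rw [← hb'] at h6
        omega
      have hab' : 1 ≤ a b' := hsupp _ b' (by omega) (by omega) hab
      have hx : psum a b' < n := by
        have h1 : psum a (b' + 1) ≤ n := by
          have : b' + 1 ≤ n := by omega
          have := psum_mono a this
          omega
        have := psum_succ a b'
        omega
      set x : Fin n := ⟨psum a b', hx⟩ with hxdef
      have hBx : blockIdx n a x = b' := by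
        refine blockIdx_eq_of hn x (le_refl _) ?_
        show psum a b' < psum a (b' + 1)
        have := psum_succ a b'
        omega
      have hjx : j < x := by
        rw [Fin.lt_def]
        show (j : ℕ) < psum a b'
        exact hspecj.2
      have hbm : ∀ i : Fin n, i < x → blockIdx n a i < blockIdx n a x := by
        intro i hix
        rw [hBx]
        by_contra hcon
        have h1 : b' ≤ blockIdx n a i := not_lt.mp hcon
        have h2 := (blockIdx_spec hn i).1
        have h3 := psum_mono a h1
        have h4 : (i : ℕ) < psum a b' := by
          have h5 := Fin.lt_def.mp hix
          simpa [hxdef] using h5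
        omega
      have hwjx : w j < w x := hLR x hbm j hjx
      have hstep := lisFrom_succ_le hjx hwjx
      have hih : n - blockIdx n a x ≤ lisFrom w x := by
        refine ih x ?_
        rw [hBx]
        omega
      rw [hBx] at hih
      omega
    · have := one_le_lisFrom w j
      omega
/-! ### Structure of the valley permutation -/

lemma valley_norm {f : Equiv.Perm (Fin n)} (hf : Valley f) (hn0 : 0 < n) :
    ∃ a0 : ℕ, a0 < n ∧ (∀ i j : Fin n, i < j → (j : ℕ) ≤ a0 → f j < f i) ∧
      (∀ i j : Fin n, a0 ≤ (i : ℕ) → i < j → f i < f j) := by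
  obtain ⟨a, hdec, hinc⟩ := hf
  refine ⟨min a (n - 1), by omega, ?_, ?_⟩
  · intro i j hij hja
    exact hdec i j hij (le_trans hja (min_le_left _ _))
  · intro i j hia hij
    rcases le_or_gt a (i : ℕ) with h | h
    · exact hinc i j h hij
    · exfalso
      have h2 : (i : ℕ) < (j : ℕ) := hij
      have := j.isLt
      omega

lemma valley_tail_lis {f : Equiv.Perm (Fin n)} {a0 : ℕ}
    (hinc : ∀ i j : Fin n, a0 ≤ (i : ℕ) → i < j → f i < f j)
    {q : Fin n} (hq : a0 ≤ (q : ℕ)) : lisFrom f q = n - (q : ℕ) := by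
  refine le_antisymm (lisFrom_le f q) ?_
  have hchain : IsChain f q (Finset.univ.filter fun k => q ≤ k) := by
    refine ⟨by simp, fun k hk => (Finset.mem_filter.mp hk).2, ?_⟩
    intro j hj k hk hjk
    exact hinc j k (le_trans hq (Finset.mem_filter.mp hj).2) hjk
  have hcard : (Finset.univ.filter fun k => q ≤ k).card = n - (q : ℕ) := by
    rw [show (Finset.univ.filter fun k => q ≤ k) = Finset.Ici q by ext; simp, Fin.card_Ici]
  rw [← hcard]
  exact card_le_lisFrom hchain

lemma valley_lt_val_iff {f : Equiv.Perm (Fin n)} {a0 : ℕ} (ha0 : a0 < n)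
    (hdec : ∀ i j : Fin n, i < j → (j : ℕ) ≤ a0 → f j < f i)
    (hinc : ∀ i j : Fin n, a0 ≤ (i : ℕ) → i < j → f i < f j)
    {q : Fin n} (hq : a0 ≤ (q : ℕ)) (u : Fin n) :
    u < f q ↔ n - (q : ℕ) + 1 ≤ lisFrom f (f⁻¹ u) := by
  have hfq : f (f⁻¹ u) = u := f.apply_inv_self u
  constructor
  · intro hu
    rcases le_or_gt a0 ((f⁻¹ u : ℕ)) with hp | hp
    · -- u is a tail value, strictly left of q
      have hpq : f⁻¹ u < q := by
        rcases lt_trichotomy (f⁻¹ u) q with h | h | h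
        · exact h
        · exfalso; rw [h] at hfq; rw [hfq] at hu; exact absurd hu (lt_irrefl _)
        · exfalso
          have := hinc q (f⁻¹ u) hq h
          rw [hfq] at this
          exact absurd (hu.trans this) (lt_irrefl _)
      rw [valley_tail_lis hinc hp]
      have h1 : (f⁻¹ u : ℕ) < (q : ℕ) := hpq
      have := q.isLt
      omega
    · -- u is a prefix value
      have hpq : f⁻¹ u < q := by rw [Fin.lt_def]; omega
      have hchain : IsChain f (f⁻¹ u) (insert (f⁻¹ u) (Finset.univ.filter fun k => q ≤ k)) := by
        refine ⟨Finset.mem_insert_self _ _, ?_, ?_⟩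
        · intro k hk
          rcases Finset.mem_insert.mp hk with rfl | hk
          · exact le_refl _
          · exact le_of_lt (lt_of_lt_of_le hpq (Finset.mem_filter.mp hk).2)
        · intro b hb c hc hbc
          rcases Finset.mem_insert.mp hb with hb' | hb'
          · rcases Finset.mem_insert.mp hc with hc' | hc'
            · rw [hb', hc'] at hbc; exact absurd hbc (lt_irrefl _)
            · subst hb'
              rw [hfq]
              have hqc : q ≤ c := (Finset.mem_filter.mp hc').2
              rcases eq_or_lt_of_le hqc with h' | h'
              · rw [← h']; exact hu
              · exact hu.trans (hinc q c hq h')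
          · rcases Finset.mem_insert.mp hc with hc' | hc'
            · exfalso
              subst hc'
              exact absurd (hbc.trans_le (le_of_lt (hpq.trans_le
                (Finset.mem_filter.mp hb').2))) (lt_irrefl _)
            · exact hinc b c (le_trans hq (Finset.mem_filter.mp hb').2) hbc
      have hcard : (insert (f⁻¹ u) (Finset.univ.filter fun k => q ≤ k)).card
          = n - (q : ℕ) + 1 := by
        rw [Finset.card_insert_of_notMem (by
          simp only [Finset.mem_filter, Finset.mem_univ, true_and]
          exact not_le.mpr hpq)]
        rw [show (Finset.univ.filter fun k => q ≤ k) = Finset.Ici q by ext; simp, Fin.card_Ici]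
      rw [← hcard]
      exact card_le_lisFrom hchain
  · intro hlis
    by_contra hcon
    rcases eq_or_lt_of_le (not_lt.mp hcon) with h | h
    · -- u = f q
      have : f⁻¹ u = q := by rw [← h]; exact f.inv_apply_self q
      rw [this, valley_tail_lis hinc hq] at hlis
      omega
    · -- f q < u
      rcases le_or_gt a0 ((f⁻¹ u : ℕ)) with hp | hp
      · have hqp : q < f⁻¹ u := by
          rcases lt_trichotomy q (f⁻¹ u) with h' | h' | h'
          · exact h'
          · exfalso; rw [← h'] at hfq; rw [hfq] at h; exact absurd h (lt_irrefl _)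
          · exfalso
            have := hinc (f⁻¹ u) q hp h'
            rw [hfq] at this
            exact absurd (h.trans this) (lt_irrefl _)
        rw [valley_tail_lis hinc hp] at hlis
        have h1 : (q : ℕ) < (f⁻¹ u : ℕ) := hqp
        omega
      · -- u is a prefix value: any chain from it stays in {p} ∪ (q, n)
        obtain ⟨s, ⟨his, hmin, hinc'⟩, hcard⟩ := exists_lis_chain f (f⁻¹ u)
        have hsub : s ⊆ insert (f⁻¹ u) (Finset.univ.filter fun k => q < k) := by
          intro k hk
          rcases eq_or_ne k (f⁻¹ u) with rfl | hne
          · exact Finset.mem_insert_self _ _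
          · refine Finset.mem_insert_of_mem ?_
            simp only [Finset.mem_filter, Finset.mem_univ, true_and]
            have hpk : f⁻¹ u < k := lt_of_le_of_ne (hmin k hk) (Ne.symm hne)
            have hfk : f (f⁻¹ u) < f k := hinc' _ his k hk hpk
            rw [hfq] at hfk
            have hka : a0 ≤ (k : ℕ) := by
              by_contra hka
              have := hdec (f⁻¹ u) k hpk (by omega)
              rw [hfq] at this
              exact absurd (hfk.trans this) (lt_irrefl _)
            rcases lt_trichotomy q k with h' | h' | h'
            · exact h'
            · exfalso; rw [← h'] at hfk; exact absurd (h.trans hfk) (lt_irrefl _)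
            · exfalso
              have := hinc k q hka h'
              exact absurd ((h.trans hfk).trans this) (lt_irrefl _)
        have hcard2 : (insert (f⁻¹ u) (Finset.univ.filter fun k => q < k)).card ≤
            n - (q : ℕ) := by
          rw [Finset.card_insert_of_notMem (by
            simp only [Finset.mem_filter, Finset.mem_univ, true_and]
            exact not_lt.mpr (le_of_lt (by rw [Fin.lt_def]; omega)))]
          rw [show (Finset.univ.filter fun k => q < k) = Finset.Ioi q by ext; simp,
            Fin.card_Ioi]
          have := q.isLt
          omega
        have := Finset.card_le_card hsub
        omega
/-! ### Tail values of the valley are the block minima -/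

lemma count_lis_ge_of_shape {a : ℕ → ℕ} (hn : psum a n = n) {α : Fin n → ℕ}
    (hA : ∀ k : Fin n, a (k : ℕ) = α k) {f : Equiv.Perm (Fin n)} (hsh : shape f = α)
    {v : ℕ} (hv : 1 ≤ v) :
    (Finset.univ.filter fun i : Fin n => v ≤ lisFrom f i).card = psum a (n + 1 - v) := by
  have key : ∀ d : ℕ, ∀ v : ℕ, 1 ≤ v → n + 1 ≤ v + d →
      (Finset.univ.filter fun i : Fin n => v ≤ lisFrom f i).card = psum a (n + 1 - v) := by
    intro d
    induction d with
    | zero =>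
      intro v _ hd
      have h1 : (Finset.univ.filter fun i : Fin n => v ≤ lisFrom f i) = ∅ := by
        rw [Finset.filter_eq_empty_iff]
        intro i _
        have := lisFrom_le_n f i
        omega
      rw [h1, show n + 1 - v = 0 by omega]
      simp [psum]
    | succ d ih =>
      intro v hv1 hd
      rcases Nat.lt_or_ge n (v + d) with h' | h'
      · exact ih v hv1 (by omega)
      · -- here v ≤ n
        have hvn : v ≤ n := by omega
        rw [card_filter_split, ih (v + 1) (by omega) (by omega)]
        have hfib : (Finset.univ.filter fun i : Fin n => lisFrom f i = v).card = a (n - v) := by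
          have h2 := congrFun hsh ⟨n - v, by omega⟩
          rw [shapeCount] at h2
          simp only at h2
          rw [show n - (n - v) = v by omega] at h2
          rw [h2, ← hA ⟨n - v, by omega⟩]
        rw [hfib, show n + 1 - v = (n - v) + 1 by omega, psum_succ,
          show n + 1 - (v + 1) = n - v by omega]
  exact key (n + 1) v hv (by omega)

lemma valley_tail_val {a : ℕ → ℕ} (hn : psum a n = n) {α : Fin n → ℕ}
    (hA : ∀ k : Fin n, a (k : ℕ) = α k) {f : Equiv.Perm (Fin n)} (hsh : shape f = α)
    {a0 : ℕ} (ha0 : a0 < n)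
    (hdec : ∀ i j : Fin n, i < j → (j : ℕ) ≤ a0 → f j < f i)
    (hinc : ∀ i j : Fin n, a0 ≤ (i : ℕ) → i < j → f i < f j)
    {q : Fin n} (hq : a0 ≤ (q : ℕ)) : (f q : ℕ) = psum a (q : ℕ) := by
  have h1 : (f q : ℕ) = (Finset.univ.filter fun u : Fin n => u < f q).card := by
    rw [show (Finset.univ.filter fun u : Fin n => u < f q) = Finset.Iio (f q) by ext; simp,
      Fin.card_Iio]
  rw [h1]
  rw [filter_card_congr (q := fun u : Fin n => n - (q : ℕ) + 1 ≤ lisFrom f (f⁻¹ u))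
    (fun u => valley_lt_val_iff ha0 hdec hinc hq u)]
  rw [card_filter_perm f⁻¹ (fun i => n - (q : ℕ) + 1 ≤ lisFrom f i)]
  rw [count_lis_ge_of_shape hn hA hsh (by omega)]
  congr 1
  have := q.isLt
  omega

lemma psum_blockMin {a : ℕ → ℕ} (hn : psum a n = n) {x : Fin n} {b : ℕ}
    (hx : (x : ℕ) = psum a b) :
    ∀ i : Fin n, i < x → blockIdx n a i < blockIdx n a x := by
  have hspec := blockIdx_spec hn x
  have hpsx : psum a (blockIdx n a x) = (x : ℕ) := by
    rcases le_or_gt b (blockIdx n a x) with h | h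
    · have := psum_mono a h
      omega
    · exfalso
      have : blockIdx n a x + 1 ≤ b := h
      have := psum_mono a this
      omega
  intro i hix
  by_contra hcon
  have h1 : blockIdx n a x ≤ blockIdx n a i := not_lt.mp hcon
  have h2 := (blockIdx_spec hn i).1
  have := psum_mono a h1
  have h3 : (i : ℕ) < (x : ℕ) := hix
  omega

lemma blockMin_psum {a : ℕ → ℕ} (hn : psum a n = n) {j : Fin n}
    (hbm : ∀ i : Fin n, i < j → blockIdx n a i < blockIdx n a j) :
    (j : ℕ) = psum a (blockIdx n a j) := by
  have hspec := blockIdx_spec hn j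
  by_contra hcon
  have h1 : psum a (blockIdx n a j) < (j : ℕ) := by omega
  have hin : psum a (blockIdx n a j) < n := by have := j.isLt; omega
  set i : Fin n := ⟨psum a (blockIdx n a j), hin⟩ with hidef
  have hBi : blockIdx n a i = blockIdx n a j := by
    refine blockIdx_eq_of hn i (le_refl _) ?_
    show psum a (blockIdx n a j) < psum a (blockIdx n a j + 1)
    omega
  have hij : i < j := by rw [Fin.lt_def]; exact h1
  exact absurd (hBi ▸ hbm i hij) (lt_irrefl _)

lemma valley_bottom {f : Equiv.Perm (Fin n)} {a0 : ℕ} (ha0 : a0 < n)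
    (hdec : ∀ i j : Fin n, i < j → (j : ℕ) ≤ a0 → f j < f i)
    (hinc : ∀ i j : Fin n, a0 ≤ (i : ℕ) → i < j → f i < f j) :
    (f ⟨a0, ha0⟩ : ℕ) = 0 := by
  set a0f : Fin n := ⟨a0, ha0⟩ with ha0f
  have hmin : ∀ x : Fin n, f a0f ≤ f x := by
    intro x
    rcases lt_trichotomy x a0f with h | h | h
    · exact le_of_lt (hdec x a0f h (le_refl _))
    · rw [h]
    · exact le_of_lt (hinc a0f x (le_refl _) h)
  have := hmin (f⁻¹ ⟨0, by omega⟩)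
  rw [f.apply_inv_self] at this
  have h2 : (f a0f : ℕ) ≤ 0 := this
  omega

lemma tail_iff_blockMin {a : ℕ → ℕ} (hn : psum a n = n) {α : Fin n → ℕ}
    (hA : ∀ k : Fin n, a (k : ℕ) = α k) {f : Equiv.Perm (Fin n)} (hsh : shape f = α)
    {a0 : ℕ} (ha0 : a0 < n)
    (hdec : ∀ i j : Fin n, i < j → (j : ℕ) ≤ a0 → f j < f i)
    (hinc : ∀ i j : Fin n, a0 ≤ (i : ℕ) → i < j → f i < f j)
    (j : Fin n) :
    a0 ≤ ((f⁻¹ j : Fin n) : ℕ) ↔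
      ∀ i : Fin n, i < j → blockIdx n a i < blockIdx n a j := by
  constructor
  · intro hq
    have hval : (j : ℕ) = psum a ((f⁻¹ j : Fin n) : ℕ) := by
      have := valley_tail_val hn hA hsh ha0 hdec hinc (q := f⁻¹ j) hq
      rw [f.apply_inv_self] at this
      exact this
    exact psum_blockMin hn hval
  · intro hbm
    have hval := blockMin_psum hn hbm
    rcases le_or_gt a0 (blockIdx n a j) with h | h
    · have hBn := blockIdx_lt hn j
      set q : Fin n := ⟨blockIdx n a j, hBn⟩ with hqdef
      have h2 : (f q : ℕ) = psum a (blockIdx n a j) := by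
        have h7 := valley_tail_val hn hA hsh ha0 hdec hinc (q := q) h
        exact h7
      have h3 : f q = j := Fin.ext (by omega)
      rw [← h3, f.inv_apply_self]
      exact h
    · -- low blocks are empty: j = 0 = value of the valley bottom
      have hz := valley_bottom ha0 hdec hinc
      have h2 : psum a a0 = 0 := by
        have h7 : (f ⟨a0, ha0⟩ : ℕ) = psum a a0 :=
          valley_tail_val hn hA hsh ha0 hdec hinc (q := ⟨a0, ha0⟩) (le_refl _)
        omega
      have h4 : psum a (blockIdx n a j) ≤ psum a a0 := psum_mono a (le_of_lt h)
      have h5 : (j : ℕ) = 0 := by omega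
      have h6 : f ⟨a0, ha0⟩ = j := Fin.ext (by omega)
      rw [← h6, f.inv_apply_self]

lemma invSet_valley_iff {a : ℕ → ℕ} (hn : psum a n = n) {α : Fin n → ℕ}
    (hA : ∀ k : Fin n, a (k : ℕ) = α k) {f : Equiv.Perm (Fin n)} (hsh : shape f = α)
    {a0 : ℕ} (ha0 : a0 < n)
    (hdec : ∀ i j : Fin n, i < j → (j : ℕ) ≤ a0 → f j < f i)
    (hinc : ∀ i j : Fin n, a0 ≤ (i : ℕ) → i < j → f i < f j)
    (w : Equiv.Perm (Fin n)) :
    invSet w ⊆ invSet f⁻¹ ↔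
      ∀ j : Fin n, (∀ i : Fin n, i < j → blockIdx n a i < blockIdx n a j) →
        ∀ i, i < j → w i < w j := by
  have hJ8 : ∀ u v : Fin n, u < v → (f⁻¹ v < f⁻¹ u ↔ ((f⁻¹ v : Fin n) : ℕ) < a0) := by
    intro u v huv
    constructor
    · intro hinv
      by_contra hcon
      have := hinc (f⁻¹ v) (f⁻¹ u) (not_lt.mp hcon) hinv
      rw [f.apply_inv_self, f.apply_inv_self] at this
      exact absurd (huv.trans this) (lt_irrefl _)
    · intro hv
      rcases lt_trichotomy (f⁻¹ v) (f⁻¹ u) with h | h | h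
      · exact h
      · exfalso
        have := f⁻¹.injective h
        rw [this] at huv
        exact absurd huv (lt_irrefl _)
      · exfalso
        have := hdec (f⁻¹ u) (f⁻¹ v) h (by omega)
        rw [f.apply_inv_self, f.apply_inv_self] at this
        exact absurd (huv.trans this) (lt_irrefl _)
  constructor
  · intro hsub j hbm i hij
    by_contra hcon
    have hji : w j < w i := lt_of_le_of_ne (not_lt.mp hcon) (fun hh => by
      rw [w.injective hh] at hij; exact absurd hij (lt_irrefl _))
    have hmem : (i, j) ∈ invSet w := mem_invSet.mpr ⟨hij, hji⟩
    have := mem_invSet.mp (hsub hmem)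
    have h2 := (hJ8 i j hij).mp this.2
    have h3 := (tail_iff_blockMin hn hA hsh ha0 hdec hinc j).mpr hbm
    omega
  · intro hLR p hp
    rw [mem_invSet] at hp ⊢
    obtain ⟨h12, hw⟩ := hp
    refine ⟨h12, ?_⟩
    rw [hJ8 p.1 p.2 h12]
    by_contra hcon
    have hbm := (tail_iff_blockMin hn hA hsh ha0 hdec hinc p.2).mp (not_lt.mp hcon)
    exact absurd (hLR p.2 hbm p.1 h12) (not_lt.mpr (le_of_lt hw))

lemma invSet_layered_iff {a : ℕ → ℕ} (hn : psum a n = n) (w : Equiv.Perm (Fin n)) :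
    invSet (layered n a) ⊆ invSet w ↔
      ∀ i j : Fin n, i < j → blockIdx n a i = blockIdx n a j → w j < w i := by
  constructor
  · intro hsub i j hij hb
    have hmem : (i, j) ∈ invSet (layered n a) := mem_invSet.mpr ⟨hij, layered_desc' hn hij hb⟩
    exact (mem_invSet.mp (hsub hmem)).2
  · intro hdec p hp
    rw [mem_invSet] at hp ⊢
    obtain ⟨h12, he⟩ := hp
    refine ⟨h12, ?_⟩
    rcases eq_or_lt_of_le (blockIdx_mono (a := a) (le_of_lt h12)) with hb | hb
    · exact hdec p.1 p.2 h12 hb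
    · exact absurd (layered_asc' hn hb) (not_lt.mpr (le_of_lt he))
/-- Let `α` be a composition of `n` whose support is an upper interval,
`e_α` the corresponding layered permutation, and `f` the (unique) valley permutation of
shape `α`.  Then the fireworks permutations of shape `α` are exactly the left weak order
interval `[e_α, f⁻¹]_L`, and the inverse fireworks permutations of shape `α` are exactly
the right weak order interval `[e_α, f]_R`. -/
theorem fireworks_interval (n : ℕ) (α : Fin n → ℕ)
    (hsum : ∑ k, α k = n)
    (hsupp : ∃ t : ℕ, ∀ k : Fin n, 1 ≤ α k ↔ t ≤ (k : ℕ) + 1)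
    (f : Equiv.Perm (Fin n)) (hf : Valley f) (hfshape : shape f = α) :
    (∀ w : Equiv.Perm (Fin n),
        (Fireworks w ∧ shape w = α) ↔ (leL (eOf α) w ∧ leL w f⁻¹)) ∧
    (∀ w : Equiv.Perm (Fin n),
        (InvFireworks w ∧ shape w = α) ↔ (leR (eOf α) w ∧ leR w f)) := by
  rcases Nat.eq_zero_or_pos n with hn0 | hn0
  · -- trivial case `n = 0`
    subst hn0
    have hfw : ∀ w : Equiv.Perm (Fin 0), Fireworks w := by
      rintro w ⟨i, -⟩
      exact i.elim0
    have hshape : ∀ w : Equiv.Perm (Fin 0), shape w = α := by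
      intro w; funext k; exact k.elim0
    have hinv : ∀ w : Equiv.Perm (Fin 0), invNum w = 0 := by
      intro w
      rw [invNum]
      simp
    have hleL : ∀ u w : Equiv.Perm (Fin 0), leL u w :=
      fun u w => ⟨w * u⁻¹, by rw [inv_mul_cancel_right], by rw [hinv, hinv, hinv]⟩
    have hleR : ∀ u w : Equiv.Perm (Fin 0), leR u w :=
      fun u w => ⟨u⁻¹ * w, by rw [mul_inv_cancel_left], by rw [hinv, hinv, hinv]⟩
    exact ⟨fun w => ⟨fun _ => ⟨hleL _ _, hleL _ _⟩, fun _ => ⟨hfw w, hshape w⟩⟩,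
      fun w => ⟨fun _ => ⟨hleR _ _, hleR _ _⟩, fun _ => ⟨hfw w⁻¹, hshape w⟩⟩⟩
  · set a : ℕ → ℕ := fun m => if h : m < n then α ⟨m, h⟩ else 0 with ha
    have heq : eOf α = layered n a := by rw [ha]; rfl
    have hA : ∀ k : Fin n, a (k : ℕ) = α k := by
      intro k
      simp only [ha, k.isLt, dif_pos]
    have hn : psum a n = n := by
      rw [psum, ← Fin.sum_univ_eq_sum_range (fun j => a j) n]
      rw [Finset.sum_congr rfl (fun k _ => hA k)]
      exact hsum
    have hsupp' : ∀ b b' : ℕ, b ≤ b' → b' < n → 1 ≤ a b → 1 ≤ a b' := by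
      obtain ⟨t, ht⟩ := hsupp
      intro b b' hbb' hb'n hab
      have hbn : b < n := by
        by_contra hcon
        rw [ha] at hab
        simp only [dif_neg hcon] at hab
        omega
      have h8 : a b' = α ⟨b', hb'n⟩ := hA ⟨b', hb'n⟩
      have h9 : a b = α ⟨b, hbn⟩ := hA ⟨b, hbn⟩
      rw [h9] at hab
      rw [h8]
      refine (ht ⟨b', hb'n⟩).mpr ?_
      have := (ht ⟨b, hbn⟩).mp hab
      simp only at this ⊢
      omega
    obtain ⟨a0, ha0, hdec, hinc⟩ := valley_norm hf hn0
    -- Statement 1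
    have S1 : ∀ w : Equiv.Perm (Fin n),
        (Fireworks w ∧ shape w = α) ↔ (leL (eOf α) w ∧ leL w f⁻¹) := by
      intro w
      rw [leL_iff, leL_iff, heq, invSet_layered_iff hn w,
        invSet_valley_iff hn hA hfshape ha0 hdec hinc w]
      constructor
      · rintro ⟨hfw, hsh⟩
        have hni := fireworks_noninc hfw
        have hpt : ∀ i, lisFrom w i = n - blockIdx n a i :=
          noninc_fiber_eq hni
            (fun p q hpq => Nat.sub_le_sub_left (blockIdx_mono hpq) n)
            (lisFrom_le_n w) (fun i => Nat.sub_le _ _)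
            (fibers_of_shape hn hA w hsh)
        exact ⟨X1_desc hn hpt, X2_lrmax hn hpt⟩
      · rintro ⟨h1, h2⟩
        have hle := X3_le hn h1
        have hge := X4_ge hn hsupp' h2
        have hpt : ∀ i, lisFrom w i = n - blockIdx n a i :=
          fun i => le_antisymm (hle i) (hge i)
        refine ⟨noninc_fireworks (fun p q hpq => ?_), shape_eq_of_pointwise hn hA w hpt⟩
        rw [hpt p, hpt q]
        exact Nat.sub_le_sub_left (blockIdx_mono hpq) n
    have hEinv : (eOf α)⁻¹ = eOf α := by rw [heq]; exact layered_inv hn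
    refine ⟨S1, fun w => ?_⟩
    constructor
    · rintro ⟨hif, hsh⟩
      have h := (S1 w⁻¹).mp ⟨hif, by rw [shape_inv]; exact hsh⟩
      exact ⟨leR_iff_leL_inv.mpr (by rw [hEinv]; exact h.1), leR_iff_leL_inv.mpr h.2⟩
    · rintro ⟨h1, h2⟩
      have h1' := leR_iff_leL_inv.mp h1
      rw [hEinv] at h1'
      have h2' := leR_iff_leL_inv.mp h2
      have h := (S1 w⁻¹).mpr ⟨h1', h2'⟩
      exact ⟨h.1, by rw [← shape_inv]; exact h.2⟩

end RajRegularity
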